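/- Let J : M₁ → M₂ be a normal Jordan *-monomorphism between von Neumann algebras, and let p be a central projection in M₁ such that J is a *-homomorphism on pM₁p and a *-anti-homomorphism on (1−p)M₁(1−p). Then for every x ∈ M₁, |J(x)| = J(p|x| + (1−p)|x*|). -/

import Mathlib

open Matrix ComplexOrder

/-- The absolute value `|A| = (Aᴴ A)^{1/2}` of a matrix. -/
noncomputable def matAbs {n : ℕ} (A : Matrix (Fin n) (Fin n) ℂ) :
    Matrix (Fin n) (Fin n) ℂ :=
  (((Matrix.posSemidef_conjTranspose_mul_self A).1 : (Aᴴ * A).IsHermitian).eigenvectorUnitary :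
      Matrix (Fin n) (Fin n) ℂ) *
    diagonal (((↑) : ℝ → ℂ) ∘ (√·) ∘ ((Matrix.posSemidef_conjTranspose_mul_self A).1 :
      (Aᴴ * A).IsHermitian).eigenvalues) *
    (star ((Matrix.posSemidef_conjTranspose_mul_self A).1 :
      (Aᴴ * A).IsHermitian).eigenvectorUnitary : Matrix (Fin n) (Fin n) ℂ)

section
open scoped MatrixOrder
theorem matAbs_eq_sqrt {n : ℕ} (A : Matrix (Fin n) (Fin n) ℂ) :
    matAbs A = CFC.sqrt (Aᴴ * A) := by
  have h0 : (0 : Matrix (Fin n) (Fin n) ℂ) ≤ Aᴴ * A :=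
    (Matrix.posSemidef_conjTranspose_mul_self A).nonneg
  rw [CFC.sqrt_eq_real_sqrt _ h0, cfcₙ_eq_cfc,
    Matrix.IsHermitian.cfc_eq (Matrix.posSemidef_conjTranspose_mul_self A).1]
  rfl

theorem matAbs_posSemidef {n : ℕ} (A : Matrix (Fin n) (Fin n) ℂ) : (matAbs A).PosSemidef := by
  rw [matAbs_eq_sqrt]; exact (CFC.sqrt_nonneg _).posSemidef

theorem matAbs_mul_self {n : ℕ} (A : Matrix (Fin n) (Fin n) ℂ) :
    matAbs A * matAbs A = Aᴴ * A := by
  rw [matAbs_eq_sqrt]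
  exact CFC.sqrt_mul_sqrt_self _ (Matrix.posSemidef_conjTranspose_mul_self A).nonneg

theorem matAbs_unique {n : ℕ} {A B : Matrix (Fin n) (Fin n) ℂ} (hB : B.PosSemidef)
    (h : B ^ 2 = Aᴴ * A) : B = matAbs A := by
  rw [matAbs_eq_sqrt]
  exact (CFC.sqrt_unique (by rw [← pow_two, h]) hB.nonneg).symm

noncomputable def matSqrt {n : ℕ} (A : Matrix (Fin n) (Fin n) ℂ) : Matrix (Fin n) (Fin n) ℂ :=
  CFC.sqrt A

theorem matSqrt_posSemidef {n : ℕ} (A : Matrix (Fin n) (Fin n) ℂ) : (matSqrt A).PosSemidef :=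
  (CFC.sqrt_nonneg _).posSemidef

theorem matSqrt_mul_self {n : ℕ} {A : Matrix (Fin n) (Fin n) ℂ} (hA : A.PosSemidef) :
    matSqrt A * matSqrt A = A :=
  CFC.sqrt_mul_sqrt_self _ hA.nonneg
end

set_option maxHeartbeats 1000000 in
/-- If `J` is an injective Jordan *-homomorphism which is a *-homomorphism on
`pM₁p` and a *-anti-homomorphism on `(1−p)M₁(1−p)` for a central projection `p`,
then `|J(x)| = J(p|x| + (1−p)|x*|)` for every `x`. -/
theorem stmt_12 {n m : ℕ}
    (J : Matrix (Fin n) (Fin n) ℂ →ₗ[ℂ] Matrix (Fin m) (Fin m) ℂ)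
    (hstar : ∀ x, J xᴴ = (J x)ᴴ)
    (hsq : ∀ x, J (x * x) = J x * J x)
    (hinj : Function.Injective J)
    (p : Matrix (Fin n) (Fin n) ℂ)
    (hp : p * p = p) (hpH : pᴴ = p) (hcentral : ∀ x, p * x = x * p)
    (hhom : ∀ x y, J ((p * x * p) * (p * y * p)) = J (p * x * p) * J (p * y * p))
    (hanti : ∀ x y, J (((1 - p) * x * (1 - p)) * ((1 - p) * y * (1 - p))) =
      J ((1 - p) * y * (1 - p)) * J ((1 - p) * x * (1 - p))) :
    ∀ x, matAbs (J x) = J (p * matAbs x + (1 - p) * matAbs xᴴ) := by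
  intro x
  set q : Matrix (Fin n) (Fin n) ℂ := 1 - p with hq_def
  have hqcentral : ∀ y, q * y = y * q := by
    intro y; simp only [hq_def, sub_mul, mul_sub, one_mul, mul_one, hcentral y]
  have hqq : q * q = q := by
    simp only [hq_def, sub_mul, mul_sub, one_mul, mul_one, hp]; abel
  have hqH : qᴴ = q := by simp [hq_def, hpH]
  have hpq : p * q = 0 := by simp [hq_def, mul_sub, hp]
  have hqp : q * p = 0 := by simp [hq_def, sub_mul, hp]
  have hpcollapse : ∀ y, p * y * p = p * y := by
    intro y; rw [mul_assoc, ← hcentral y, ← mul_assoc, hp]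
  have hqcollapse : ∀ y, q * y * q = q * y := by
    intro y; rw [mul_assoc, ← hqcentral y, ← mul_assoc, hqq]
  -- restated hom / anti-hom
  have hhom' : ∀ a b, J ((p * a) * (p * b)) = J (p * a) * J (p * b) := by
    intro a b; have h := hhom a b; rwa [hpcollapse a, hpcollapse b] at h
  have hanti' : ∀ a b, J ((q * a) * (q * b)) = J (q * b) * J (q * a) := by
    intro a b; have h := hanti a b; rwa [hqcollapse a, hqcollapse b] at h
  -- product collapsing lemmas
  have mulpp : ∀ a b, (p * a) * (p * b) = p * (a * b) := by
    intro a b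
    calc (p*a)*(p*b) = (p*a*p)*b := (mul_assoc _ _ _).symm
      _ = (p*a)*b := by rw [hpcollapse]
      _ = p*(a*b) := mul_assoc _ _ _
  have mulqq : ∀ a b, (q * a) * (q * b) = q * (a * b) := by
    intro a b
    calc (q*a)*(q*b) = (q*a*q)*b := (mul_assoc _ _ _).symm
      _ = (q*a)*b := by rw [hqcollapse]
      _ = q*(a*b) := mul_assoc _ _ _
  have mulpq : ∀ a b, (p * a) * (q * b) = 0 := by
    intro a b
    calc (p*a)*(q*b) = (p*(a*q))*b := by rw [← mul_assoc, mul_assoc p a q]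
      _ = (p*(q*a))*b := by rw [← hqcentral]
      _ = ((p*q)*a)*b := by rw [← mul_assoc]
      _ = 0 := by rw [hpq, zero_mul, zero_mul]
  have mulqp : ∀ a b, (q * a) * (p * b) = 0 := by
    intro a b
    calc (q*a)*(p*b) = (q*(a*p))*b := by rw [← mul_assoc, mul_assoc q a p]
      _ = (q*(p*a))*b := by rw [← hcentral]
      _ = ((q*p)*a)*b := by rw [← mul_assoc]
      _ = 0 := by rw [hqp, zero_mul, zero_mul]
  -- Jordan polarization
  have jordan : ∀ a b, J (a * b + b * a) = J a * J b + J b * J a := by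
    intro a b
    have key : a*b + b*a = (a+b)*(a+b) - a*a - b*b := by noncomm_ring
    rw [key, map_sub, map_sub, hsq, hsq, hsq, map_add]
    noncomm_ring
  -- J p and J q are orthogonal projections
  have he : J p * J p = J p := by rw [← hsq, hp]
  have hf : J q * J q = J q := by rw [← hsq, hqq]
  have hJpq : J p * J q + J q * J p = 0 := by
    have h := jordan p q; rw [hpq, hqp, add_zero, map_zero] at h; exact h.symm
  have h1 : J p * J q + J p * (J q * J p) = 0 := by
    have h := congrArg (fun z => J p * z) hJpq
    simpa only [mul_add, ← mul_assoc, he, mul_zero] using h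
  have h2 : J p * (J q * J p) + J q * J p = 0 := by
    have h := congrArg (fun z => z * J p) hJpq
    simpa only [add_mul, mul_assoc, he, zero_mul] using h
  have hefe : J p * J q = J q * J p := by
    have e1 : J p * J q = -(J p * (J q * J p)) := eq_neg_of_add_eq_zero_left h1
    have e2 : J q * J p = -(J p * (J q * J p)) := eq_neg_of_add_eq_zero_right h2
    exact e1.trans e2.symm
  have hJpJq : J p * J q = 0 := by
    have h : (2 : ℂ) • (J p * J q) = 0 := by
      rw [two_smul]; nth_rewrite 2 [hefe]; exact hJpq
    have := smul_eq_zero.mp h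
    simpa using this
  have hJqJp : J q * J p = 0 := by rw [← hefe]; exact hJpJq
  -- absorption
  have absL : ∀ a, J p * J (p * a) = J (p * a) := by
    intro a
    have h := hhom' 1 a
    rw [mul_one, ← mul_assoc, hp] at h
    exact h.symm
  have absR : ∀ a, J (p * a) * J p = J (p * a) := by
    intro a
    have h := hhom' a 1
    rw [mul_one, hpcollapse] at h
    exact h.symm
  have absLq : ∀ a, J q * J (q * a) = J (q * a) := by
    intro a
    have h := hanti' a 1
    rw [mul_one, hqcollapse] at h
    exact h.symm
  have absRq : ∀ a, J (q * a) * J q = J (q * a) := by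
    intro a
    have h := hanti' 1 a
    rw [mul_one, ← mul_assoc, hqq] at h
    exact h.symm
  -- orthogonality of ranges
  have orth1 : ∀ a b, J (p * a) * J (q * b) = 0 := by
    intro a b
    rw [← absR a, ← absLq b, mul_assoc, ← mul_assoc (J p), hJpJq, zero_mul, mul_zero]
  have orth2 : ∀ a b, J (q * b) * J (p * a) = 0 := by
    intro a b
    rw [← absRq b, ← absL a, mul_assoc, ← mul_assoc (J q), hJqJp, zero_mul, mul_zero]
  -- absolute values
  set ax := matAbs x with hax_def
  set ay := matAbs xᴴ with hay_def
  have haxH : axᴴ = ax := (matAbs_posSemidef x).1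
  have hayH : ayᴴ = ay := (matAbs_posSemidef xᴴ).1
  have hax2 : ax * ax = xᴴ * x :=
    matAbs_mul_self x
  have hay2 : ay * ay = x * xᴴ := by
    have h := matAbs_mul_self xᴴ
    exact h.trans (by rw [conjTranspose_conjTranspose])
  -- square roots of the absolute values
  set sx := matSqrt ax with hsx_def
  set sy := matSqrt ay with hsy_def
  have hsx2 : sx * sx = ax := matSqrt_mul_self (matAbs_posSemidef x)
  have hsy2 : sy * sy = ay := matSqrt_mul_self (matAbs_posSemidef xᴴ)
  have hsxH : sxᴴ = sx :=
    (matSqrt_posSemidef ax).1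
  have hsyH : syᴴ = sy :=
    (matSqrt_posSemidef ay).1
  set a : Matrix (Fin n) (Fin n) ℂ := p * ax + q * ay with ha_def
  -- J a is positive semidefinite
  have hJpax : J (p * ax) = (J (p * sx))ᴴ * J (p * sx) := by
    have hH : (J (p * sx))ᴴ = J (p * sx) := by
      rw [← hstar]
      congr 1
      rw [conjTranspose_mul, hsxH, hpH, ← hcentral]
    rw [hH, ← hhom', mulpp, hsx2]
  have hJqay : J (q * ay) = (J (q * sy))ᴴ * J (q * sy) := by
    have hH : (J (q * sy))ᴴ = J (q * sy) := by
      rw [← hstar]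
      congr 1
      rw [conjTranspose_mul, hsyH, hqH, ← hqcentral]
    rw [hH, ← hanti', mulqq, hsy2]
  have hJa_psd : (J a).PosSemidef := by
    rw [ha_def, map_add, hJpax, hJqay]
    exact (Matrix.posSemidef_conjTranspose_mul_self _).add
      (Matrix.posSemidef_conjTranspose_mul_self _)
  -- (J a)^2 = (J x)ᴴ * J x
  have haa : a * a = p * (xᴴ * x) + q * (x * xᴴ) := by
    rw [ha_def, add_mul, mul_add, mul_add, mulpp, mulpq, mulqp, mulqq, hax2, hay2]
    abel
  have hxdecomp : ∀ y : Matrix (Fin n) (Fin n) ℂ, y = p * y + q * y := by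
    intro y
    rw [hq_def, sub_mul, one_mul]
    abel
  have hdec : J xᴴ * J x = J (p * (xᴴ * x)) + J (q * (x * xᴴ)) := by
    have d1 : J xᴴ = J (p * xᴴ) + J (q * xᴴ) := by rw [← map_add, ← hxdecomp]
    have d2 : J x = J (p * x) + J (q * x) := by rw [← map_add, ← hxdecomp]
    rw [d1, d2, add_mul, mul_add, mul_add, orth1, orth2,
      ← hhom', mulpp, ← hanti' x xᴴ, mulqq]
    abel
  have hsqJa : J a ^ 2 = (J x)ᴴ * J x := by
    rw [pow_two, ← hsq, haa, ← hstar, hdec, map_add]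
  have key := matAbs_unique hJa_psd hsqJa
  exact key.symm
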